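/- The function φ(z) = e^z (1 + z/(e^z - 1))^2, extended by φ(0) = 4, is monotonically increasing on [0, ∞). -/

import Mathlib

open Real

noncomputable def G (z : ℝ) : ℝ := Real.exp z * ((Real.exp z - 1 + z) / (Real.exp z - 1)) ^ 2

lemma hasDerivAt_G (z : ℝ) (hz : Real.exp z - 1 ≠ 0) :
    HasDerivAt G
      (Real.exp z * ((Real.exp z - 1 + z) / (Real.exp z - 1)) ^ 2
        + Real.exp z * (2 * ((Real.exp z - 1 + z) / (Real.exp z - 1)) ^ 1 *
          (((Real.exp z + 1) * (Real.exp z - 1) - (Real.exp z - 1 + z) * Real.exp z) /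
            (Real.exp z - 1) ^ 2))) z := by
  have hA : HasDerivAt (fun z : ℝ => Real.exp z - 1 + z) (Real.exp z + 1) z := by
    exact ((Real.hasDerivAt_exp z).sub_const 1).add (hasDerivAt_id z)
  have hB : HasDerivAt (fun z : ℝ => Real.exp z - 1) (Real.exp z) z :=
    (Real.hasDerivAt_exp z).sub_const 1
  have hq := hA.div hB hz
  have h2 := hq.pow 2
  have := (Real.hasDerivAt_exp z).mul h2
  exact this.congr_deriv (by norm_num)

lemma deriv_G_nonneg {z : ℝ} (hz : 0 < z) : 0 ≤ deriv G z := by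
  have hu : 1 < Real.exp z := Real.one_lt_exp_iff.mpr hz
  have hB : Real.exp z - 1 ≠ 0 := by linarith
  rw [(hasDerivAt_G z hB).deriv]
  set u := Real.exp z with hu'
  have hzu : z + 1 ≤ u := by simpa [hu', add_comm] using Real.add_one_le_exp z
  have hBpos : 0 < u - 1 := by linarith
  have hApos : 0 < u - 1 + z := by linarith
  have key : u * ((u - 1 + z) / (u - 1)) ^ 2
        + u * (2 * ((u - 1 + z) / (u - 1)) ^ 1 *
          (((u + 1) * (u - 1) - (u - 1 + z) * u) / (u - 1) ^ 2))
      = u * (u - 1 + z) * ((u + 1) * (u - 1 - z)) / (u - 1) ^ 3 := by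
    field_simp
    ring
  rw [key]
  have h1 : 0 ≤ u - 1 - z := by linarith
  have h2 : (0:ℝ) < u := by positivity
  positivity

lemma G_monotoneOn {x : ℝ} (hx : 0 < x) : MonotoneOn G (Set.Ici x) := by
  apply monotoneOn_of_deriv_nonneg (convex_Ici x)
  · intro z hz
    have hz' : Real.exp z - 1 ≠ 0 := by
      have : 1 < Real.exp z := Real.one_lt_exp_iff.mpr (lt_of_lt_of_le hx hz)
      linarith
    exact (hasDerivAt_G z hz').continuousAt.continuousWithinAt
  · intro z hz
    rw [interior_Ici] at hz
    have hz' : Real.exp z - 1 ≠ 0 := by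
      have : 1 < Real.exp z := Real.one_lt_exp_iff.mpr (lt_trans hx hz)
      linarith
    exact (hasDerivAt_G z hz').differentiableAt.differentiableWithinAt
  · intro z hz
    rw [interior_Ici] at hz
    exact deriv_G_nonneg (lt_trans hx hz)

lemma phi_ge_four {y : ℝ} (hy : 0 < y) :
    4 ≤ Real.exp y * (1 + y / (Real.exp y - 1)) ^ 2 := by
  set t := Real.exp (y / 2) with ht'
  have ht : 1 < t := Real.one_lt_exp_iff.mpr (by linarith)
  have hty : t ^ 2 = Real.exp y := by
    rw [ht', sq, ← Real.exp_add]
    ring_nf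
  have hkey : 2 * (t - 1) / t ≤ y := by
    have h := Real.add_one_le_exp (-(y / 2))
    have htpos : (0:ℝ) < t := by linarith
    have hinv : Real.exp (-(y / 2)) = 1 / t := by
      rw [Real.exp_neg]; exact (one_div _).symm
    rw [hinv] at h
    rw [div_le_iff₀ htpos]
    have hti : t * (1 / t) = 1 := mul_one_div_cancel (ne_of_gt htpos)
    nlinarith [mul_le_mul_of_nonneg_left h htpos.le]
  have hBpos : 0 < t ^ 2 - 1 := by nlinarith
  have h2 : 2 ≤ t * (1 + y / (t ^ 2 - 1)) := by
    rw [← sub_nonneg]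
    have : t * (1 + y / (t ^ 2 - 1)) - 2 = (t * (t ^ 2 - 1 + y) - 2 * (t ^ 2 - 1)) / (t ^ 2 - 1) := by
      field_simp
    rw [this]
    apply div_nonneg _ (le_of_lt hBpos)
    have hty' : 2 * (t - 1) ≤ t * y := by
      rw [div_le_iff₀ (by linarith : (0:ℝ) < t)] at hkey
      linarith [hkey]
    nlinarith [sq_nonneg (t - 1), mul_nonneg (le_of_lt (by linarith : (0:ℝ) < t)) (sq_nonneg (t-1))]
  have : Real.exp y * (1 + y / (Real.exp y - 1)) ^ 2 = (t * (1 + y / (t ^ 2 - 1))) ^ 2 := by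
    rw [← hty]; ring
  rw [this]
  nlinarith

theorem phi_monotoneOn :
    MonotoneOn (fun z : ℝ =>
      if z = 0 then 4 else Real.exp z * (1 + z / (Real.exp z - 1)) ^ 2)
      (Set.Ici 0) := by
  intro x hx y hy hxy
  simp only [Set.mem_Ici] at hx hy
  rcases eq_or_lt_of_le hx with hx0 | hx0
  · rcases eq_or_lt_of_le hy with hy0 | hy0
    · simp [← hx0, ← hy0]
    · simp only [← hx0, if_pos rfl, if_neg (ne_of_gt hy0)]
      exact phi_ge_four hy0
  · have hy0 : 0 < y := lt_of_lt_of_le hx0 hxy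
    simp only [if_neg (ne_of_gt hx0), if_neg (ne_of_gt hy0)]
    have hGx := G_monotoneOn hx0 (Set.self_mem_Ici) (Set.mem_Ici.mpr hxy) hxy
    have hfG : ∀ z : ℝ, 0 < z → Real.exp z * (1 + z / (Real.exp z - 1)) ^ 2 = G z := by
      intro z hz
      have : Real.exp z - 1 ≠ 0 := by
        have : 1 < Real.exp z := Real.one_lt_exp_iff.mpr hz
        linarith
      unfold G
      field_simp
    rw [hfG x hx0, hfG y hy0]
    exact hGx
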